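/- Let G be a group, K a subgroup, ρ a unitary representation of G on a complex Hilbert space H, and P the orthogonal projection onto the subspace of K-fixed vectors. Let q, r ∈ G and suppose there is a sequence (h_j) in K such that (i) for every j the element h_j q h_j⁻¹ commutes with r in G, and (ii) the operators ρ(h_j) and ρ(h_j⁻¹) converge weakly to P, i.e. ⟨ρ(h_j)x, y⟩ → ⟨Px, y⟩ and ⟨ρ(h_j⁻¹)x, y⟩ → ⟨Px, y⟩ for all x, y ∈ H. Then P ρ(r) P ρ(q) P = P ρ(q) P ρ(r) P. -/

import Mathlib

open Filter

/-- Let `P` be the orthogonal projection onto the `K`-fixed vectors of a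
unitary representation `ρ` of `G`.  If `q, r ∈ G` admit a sequence `h_j ∈ K` such that
`h_j q h_j⁻¹` commutes with `r` and `ρ(h_j), ρ(h_j⁻¹) → P` weakly, then
`P ρ(r) P ρ(q) P = P ρ(q) P ρ(r) P`. -/
theorem compressions_commute_of_weak_limit
    {G : Type*} [Group G] (K : Subgroup G) {H : Type*}
    [NormedAddCommGroup H] [InnerProductSpace ℂ H] [CompleteSpace H]
    (ρ : G →* (H ≃ₗᵢ[ℂ] H))
    (V : Submodule ℂ H) (hV : ∀ x : H, x ∈ V ↔ ∀ h ∈ K, ρ h x = x)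
    (P : H →L[ℂ] H) (hPmem : ∀ x : H, P x ∈ V) (hPfix : ∀ x ∈ V, P x = x)
    (hPorth : ∀ x : H, x - P x ∈ Vᗮ)
    (q r : G) (h : ℕ → G) (hhK : ∀ j, h j ∈ K)
    (hcomm : ∀ j, Commute (h j * q * (h j)⁻¹) r)
    (hweak : ∀ x y : H,
      Tendsto (fun j => (inner ℂ (ρ (h j) x) y : ℂ)) atTop (nhds (inner ℂ (P x) y)))
    (hweak' : ∀ x y : H,
      Tendsto (fun j => (inner ℂ (ρ ((h j)⁻¹) x) y : ℂ)) atTop (nhds (inner ℂ (P x) y))) :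
    ∀ x : H, P (ρ r (P (ρ q (P x)))) = P (ρ q (P (ρ r (P x)))) := by
  -- action decomposes over multiplication
  have happly : ∀ (a b : G) (u : H), ρ (a * b) u = ρ a (ρ b u) := by
    intro a b u; rw [map_mul]; rfl
  have hone : ∀ u : H, ρ (1 : G) u = u := by
    intro u; rw [map_one]; rfl
  -- "adjoint" formula for unitaries
  have hadj : ∀ (g : G) (u v : H), (inner ℂ (ρ g u) v : ℂ) = inner ℂ u (ρ g⁻¹ v) := by
    intro g u v
    have h1 : ρ g (ρ g⁻¹ v) = v := by
      rw [← happly, mul_inv_cancel, hone]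
    calc (inner ℂ (ρ g u) v : ℂ) = inner ℂ (ρ g u) (ρ g (ρ g⁻¹ v)) := by rw [h1]
      _ = inner ℂ u (ρ g⁻¹ v) := (ρ g).inner_map_map u (ρ g⁻¹ v)
  -- P is self-adjoint
  have hsym : ∀ u v : H, (inner ℂ (P u) v : ℂ) = inner ℂ u (P v) := by
    intro u v
    have h1 : (inner ℂ (P u) (v - P v) : ℂ) = 0 :=
      (Submodule.mem_orthogonal V (v - P v)).1 (hPorth v) (P u) (hPmem u)
    have h2 : (inner ℂ (P v) (u - P u) : ℂ) = 0 :=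
      (Submodule.mem_orthogonal V (u - P u)).1 (hPorth u) (P v) (hPmem v)
    have h2' : (inner ℂ (u - P u) (P v) : ℂ) = 0 := by
      rw [← inner_conj_symm, h2, map_zero]
    have e1 : (inner ℂ (P u) v : ℂ) = inner ℂ (P u) (P v) := by
      have := inner_sub_right (𝕜 := ℂ) (P u) v (P v)
      rw [h1] at this; linear_combination -this
    have e2 : (inner ℂ u (P v) : ℂ) = inner ℂ (P u) (P v) := by
      have := inner_sub_left (𝕜 := ℂ) u (P u) (P v)
      rw [h2'] at this; linear_combination -this
    rw [e1, e2]
  -- K-elements fix P u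
  have hfix : ∀ g ∈ K, ∀ u : H, ρ g (P u) = P u :=
    fun g hg u => (hV (P u)).1 (hPmem u) g hg
  intro x
  apply ext_inner_right ℂ
  intro y
  -- the two sequences agree
  have key : ∀ j, (inner ℂ (ρ (h j) (ρ q (P x))) (ρ r⁻¹ (P y)) : ℂ)
      = inner ℂ (ρ ((h j)⁻¹) (ρ r (P x))) (ρ q⁻¹ (P y)) := by
    intro j
    have hc : r * (h j * q * (h j)⁻¹) = h j * q * (h j)⁻¹ * r := (hcomm j).symm
    calc (inner ℂ (ρ (h j) (ρ q (P x))) (ρ r⁻¹ (P y)) : ℂ)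
        = inner ℂ (ρ (h j) (ρ q (ρ ((h j)⁻¹) (P x)))) (ρ r⁻¹ (P y)) := by
          rw [hfix ((h j)⁻¹) (inv_mem (hhK j)) x]
      _ = inner ℂ (ρ (h j * q * (h j)⁻¹) (P x)) (ρ r⁻¹ (P y)) := by
          rw [happly (h j * q) ((h j)⁻¹), happly (h j) q]
      _ = inner ℂ (ρ r (ρ (h j * q * (h j)⁻¹) (P x))) (P y) := by
          rw [hadj r]
      _ = inner ℂ (ρ (r * (h j * q * (h j)⁻¹)) (P x)) (P y) := by rw [happly r]
      _ = inner ℂ (ρ (h j * q * (h j)⁻¹ * r) (P x)) (P y) := by rw [hc]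
      _ = inner ℂ (ρ (h j) (ρ q (ρ ((h j)⁻¹) (ρ r (P x))))) (P y) := by
          rw [happly (h j * q * (h j)⁻¹) r, happly (h j * q) ((h j)⁻¹), happly (h j) q]
      _ = inner ℂ (ρ q (ρ ((h j)⁻¹) (ρ r (P x)))) (ρ ((h j)⁻¹) (P y)) := by
          rw [hadj (h j)]
      _ = inner ℂ (ρ ((h j)⁻¹) (ρ r (P x))) (ρ q⁻¹ (ρ ((h j)⁻¹) (P y))) := by
          rw [hadj q]
      _ = inner ℂ (ρ ((h j)⁻¹) (ρ r (P x))) (ρ q⁻¹ (P y)) := by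
          rw [hfix ((h j)⁻¹) (inv_mem (hhK j)) y]
  have lim1 : Tendsto (fun j => (inner ℂ (ρ (h j) (ρ q (P x))) (ρ r⁻¹ (P y)) : ℂ)) atTop
      (nhds (inner ℂ (P (ρ q (P x))) (ρ r⁻¹ (P y)))) := hweak _ _
  have lim2 : Tendsto (fun j => (inner ℂ (ρ (h j) (ρ q (P x))) (ρ r⁻¹ (P y)) : ℂ)) atTop
      (nhds (inner ℂ (P (ρ r (P x))) (ρ q⁻¹ (P y)))) := by
    have := hweak' (ρ r (P x)) (ρ q⁻¹ (P y))
    simpa only [← key] using this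
  have heq : (inner ℂ (P (ρ q (P x))) (ρ r⁻¹ (P y)) : ℂ)
      = inner ℂ (P (ρ r (P x))) (ρ q⁻¹ (P y)) := tendsto_nhds_unique lim1 lim2
  calc (inner ℂ (P (ρ r (P (ρ q (P x))))) y : ℂ)
      = inner ℂ (ρ r (P (ρ q (P x)))) (P y) := by rw [hsym]
    _ = inner ℂ (P (ρ q (P x))) (ρ r⁻¹ (P y)) := by rw [hadj r]
    _ = inner ℂ (P (ρ r (P x))) (ρ q⁻¹ (P y)) := heq
    _ = inner ℂ (ρ q (P (ρ r (P x)))) (P y) := by rw [hadj q]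
    _ = inner ℂ (P (ρ q (P (ρ r (P x))))) y := by rw [hsym]
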